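/- If m balls are thrown into n bins, with each ball thrown independently of the others (but not necessarily uniformly, and with possibly different distributions per ball), and B_i denotes the number of balls in bin i, then the random variables B_1, …, B_n are negatively associated. -/

import Mathlib

open MeasureTheory

/-- A function `f` on vectors depends only on coordinates in the set `S`. -/
def DependsOnCoords {ι : Type*} (f : (ι → ℝ) → ℝ) (S : Set ι) : Prop :=
  ∀ x y : ι → ℝ, (∀ i ∈ S, x i = y i) → f x = f y

/-- Random variables `X i` are negatively associated: every two monotone increasing
functions defined on disjoint subsets of the variables are negatively correlated. -/
def NegAssoc {Ω ι : Type*} [MeasurableSpace Ω] (μ : Measure Ω) (X : ι → Ω → ℝ) : Prop :=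
  ∀ (S T : Set ι), Disjoint S T →
    ∀ f g : (ι → ℝ) → ℝ, Monotone f → Monotone g → DependsOnCoords f S → DependsOnCoords g T →
      ∫ ω, f (fun i => X i ω) * g (fun i => X i ω) ∂μ ≤
        (∫ ω, f (fun i => X i ω) ∂μ) * ∫ ω, g (fun i => X i ω) ∂μ

/-- The count vector of a configuration of balls. -/
def ballCount {m n : ℕ} (z : Fin m → Fin n) : Fin n → ℝ :=
  fun i => ((Finset.univ.filter (fun b : Fin m => z b = i)).card : ℝ)

lemma ballCount_cons {m n : ℕ} (z0 : Fin n) (z' : Fin m → Fin n) :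
    ballCount (Fin.cons z0 z') = fun i => (if z0 = i then (1:ℝ) else 0) + ballCount z' i := by
  funext i
  simp only [ballCount, Finset.card_filter]
  push_cast
  rw [Fin.sum_univ_succ]
  simp [Fin.cons_zero, Fin.cons_succ]

/-- Core combinatorial lemma: negative association of bin counts for the product
weighting, proved by induction on the number of balls. -/
lemma core_NA (n : ℕ) : ∀ (m : ℕ) (p : Fin m → Fin n → ℝ),
    (∀ b i, 0 ≤ p b i) → (∀ b, ∑ i, p b i = 1) →
    ∀ (S T : Set (Fin n)), Disjoint S T →
    ∀ (f g : (Fin n → ℝ) → ℝ), Monotone f → Monotone g →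
      DependsOnCoords f S → DependsOnCoords g T →
    ∑ z : Fin m → Fin n, (∏ b, p b (z b)) * (f (ballCount z) * g (ballCount z)) ≤
      (∑ z : Fin m → Fin n, (∏ b, p b (z b)) * f (ballCount z)) *
      ∑ z : Fin m → Fin n, (∏ b, p b (z b)) * g (ballCount z) := by
  intro m
  induction m with
  | zero =>
    intro p _ _ S T _ f g _ _ _ _
    rw [Finset.univ_unique]
    simp only [Finset.sum_singleton, Finset.univ_eq_empty, Finset.prod_empty, one_mul]
    exact le_of_eq rfl
  | succ m ih =>
    intro p hp hp1 S T hST f g hf hg hfS hgT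
    set q : Fin m → Fin n → ℝ := fun b => p b.succ with hq
    set W : (Fin m → Fin n) → ℝ := fun z' => ∏ b, q b (z' b) with hWdef
    have hW : ∀ z', 0 ≤ W z' := fun z' => Finset.prod_nonneg fun b _ => hp _ _
    -- reindex sums over `Fin (m+1) → Fin n`
    have hsum : ∀ φ : (Fin (m+1) → Fin n) → ℝ,
        ∑ z : Fin (m+1) → Fin n, (∏ b, p b (z b)) * φ z
          = ∑ z0 : Fin n, p 0 z0 * ∑ z' : Fin m → Fin n, W z' * φ (Fin.cons z0 z') := by
      intro φ
      rw [← Equiv.sum_comp (Fin.consEquiv (fun _ => Fin n))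
        (fun z => (∏ b, p b (z b)) * φ z), Fintype.sum_prod_type]
      refine Finset.sum_congr rfl fun z0 _ => ?_
      rw [Finset.mul_sum]
      refine Finset.sum_congr rfl fun z' _ => ?_
      simp only [Fin.consEquiv, Equiv.coe_fn_mk, Fin.prod_univ_succ, Fin.cons_zero,
        Fin.cons_succ, hWdef, hq]
      ring
    -- inner expectations
    set F0 : ℝ := ∑ z', W z' * f (ballCount z') with hF0
    set G0 : ℝ := ∑ z', W z' * g (ballCount z') with hG0
    set F : Fin n → ℝ := fun z0 => ∑ z', W z' * f (ballCount (Fin.cons z0 z')) with hF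
    set G : Fin n → ℝ := fun z0 => ∑ z', W z' * g (ballCount (Fin.cons z0 z')) with hG
    -- Step 1: conditional NA from the induction hypothesis
    have step1 : ∀ z0 : Fin n,
        ∑ z', W z' * (f (ballCount (Fin.cons z0 z')) * g (ballCount (Fin.cons z0 z')))
          ≤ F z0 * G z0 := by
      intro z0
      have hmono : ∀ (h : (Fin n → ℝ) → ℝ), Monotone h →
          Monotone (fun x : Fin n → ℝ => h (fun i => (if z0 = i then (1:ℝ) else 0) + x i)) := by
        intro h hh x y hxy
        exact hh fun i => add_le_add le_rfl (hxy i)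
      have hdep : ∀ (h : (Fin n → ℝ) → ℝ) (U : Set (Fin n)), DependsOnCoords h U →
          DependsOnCoords (fun x : Fin n → ℝ => h (fun i => (if z0 = i then (1:ℝ) else 0) + x i)) U := by
        intro h U hh x y hxy
        exact hh _ _ fun i hi => by rw [hxy i hi]
      have := ih q (fun b i => hp _ _) (fun b => hp1 b.succ) S T hST
        (fun x => f (fun i => (if z0 = i then (1:ℝ) else 0) + x i))
        (fun x => g (fun i => (if z0 = i then (1:ℝ) else 0) + x i))
        (hmono f hf) (hmono g hg) (hdep f S hfS) (hdep g T hgT)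
      simpa only [← ballCount_cons, hF, hG] using this
    -- Step 2: shifted expectations dominate the unshifted ones
    have step2f : ∀ z0, F0 ≤ F z0 := by
      intro z0
      refine Finset.sum_le_sum fun z' _ => ?_
      refine mul_le_mul_of_nonneg_left ?_ (hW z')
      rw [ballCount_cons]
      refine hf fun i => ?_
      have : (0:ℝ) ≤ if z0 = i then (1:ℝ) else 0 := by positivity
      linarith
    have step2g : ∀ z0, G0 ≤ G z0 := by
      intro z0
      refine Finset.sum_le_sum fun z' _ => ?_
      refine mul_le_mul_of_nonneg_left ?_ (hW z')
      rw [ballCount_cons]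
      refine hg fun i => ?_
      have : (0:ℝ) ≤ if z0 = i then (1:ℝ) else 0 := by positivity
      linarith
    -- Step 3: if `z0` lands outside the dependency set, nothing changes
    have step3f : ∀ z0, z0 ∉ S → F z0 = F0 := by
      intro z0 hz0
      refine Finset.sum_congr rfl fun z' _ => ?_
      rw [ballCount_cons]
      congr 1
      refine hfS _ _ fun i hi => ?_
      have : z0 ≠ i := fun h => hz0 (h ▸ hi)
      simp [this]
    have step3g : ∀ z0, z0 ∉ T → G z0 = G0 := by
      intro z0 hz0
      refine Finset.sum_congr rfl fun z' _ => ?_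
      rw [ballCount_cons]
      congr 1
      refine hgT _ _ fun i hi => ?_
      have : z0 ≠ i := fun h => hz0 (h ▸ hi)
      simp [this]
    -- algebra
    rw [hsum, hsum, hsum]
    have hAC : ∀ z0, (F z0 - F0) * (G z0 - G0) = 0 := by
      intro z0
      by_cases hz0 : z0 ∈ S
      · have : z0 ∉ T := Set.disjoint_left.mp hST hz0
        rw [step3g z0 this]; ring
      · rw [step3f z0 hz0]; ring
    have hA : (0:ℝ) ≤ ∑ z0, p 0 z0 * (F z0 - F0) :=
      Finset.sum_nonneg fun z0 _ => mul_nonneg (hp 0 z0) (by linarith [step2f z0])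
    have hC : (0:ℝ) ≤ ∑ z0, p 0 z0 * (G z0 - G0) :=
      Finset.sum_nonneg fun z0 _ => mul_nonneg (hp 0 z0) (by linarith [step2g z0])
    have e1 : ∑ z0, p 0 z0 * (F z0 * G z0)
        = F0 * G0 + F0 * (∑ z0, p 0 z0 * (G z0 - G0)) + G0 * (∑ z0, p 0 z0 * (F z0 - F0)) := by
      have : ∀ z0 : Fin n, p 0 z0 * (F z0 * G z0)
          = p 0 z0 * (F0 * G0) + F0 * (p 0 z0 * (G z0 - G0)) + G0 * (p 0 z0 * (F z0 - F0)) := by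
        intro z0
        linear_combination p 0 z0 * hAC z0
      rw [Finset.sum_congr rfl fun z0 _ => this z0]
      rw [Finset.sum_add_distrib, Finset.sum_add_distrib, ← Finset.mul_sum, ← Finset.mul_sum,
        ← Finset.sum_mul, hp1 0]
      ring
    have e2 : ∑ z0, p 0 z0 * F z0 = F0 + ∑ z0, p 0 z0 * (F z0 - F0) := by
      have : ∀ z0 : Fin n, p 0 z0 * F z0 = p 0 z0 * F0 + p 0 z0 * (F z0 - F0) := by
        intro z0; ring
      rw [Finset.sum_congr rfl fun z0 _ => this z0, Finset.sum_add_distrib,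
        ← Finset.sum_mul, hp1 0, one_mul]
    have e3 : ∑ z0, p 0 z0 * G z0 = G0 + ∑ z0, p 0 z0 * (G z0 - G0) := by
      have : ∀ z0 : Fin n, p 0 z0 * G z0 = p 0 z0 * G0 + p 0 z0 * (G z0 - G0) := by
        intro z0; ring
      rw [Finset.sum_congr rfl fun z0 _ => this z0, Finset.sum_add_distrib,
        ← Finset.sum_mul, hp1 0, one_mul]
    calc ∑ z0, p 0 z0 * ∑ z', W z' *
          (f (ballCount (Fin.cons z0 z')) * g (ballCount (Fin.cons z0 z')))
        ≤ ∑ z0, p 0 z0 * (F z0 * G z0) :=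
          Finset.sum_le_sum fun z0 _ => mul_le_mul_of_nonneg_left (step1 z0) (hp 0 z0)
      _ ≤ (∑ z0, p 0 z0 * F z0) * ∑ z0, p 0 z0 * G z0 := by
          rw [e1, e2, e3]; nlinarith [mul_nonneg hA hC]

/-- Expressing the expectation of a function of the ball configuration as a weighted
sum, using independence. -/
lemma integral_eq_sum {Ω : Type*} [MeasurableSpace Ω] (μ : Measure Ω) [IsProbabilityMeasure μ]
    (m n : ℕ) (Z : Fin m → Ω → Fin n)
    (hmeas : ∀ b, Measurable (Z b))
    (hind : ProbabilityTheory.iIndepFun Z μ)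
    (φ : (Fin m → Fin n) → ℝ) :
    ∫ ω, φ (fun b => Z b ω) ∂μ =
      ∑ z : Fin m → Fin n, (∏ b, (μ (Z b ⁻¹' {z b})).toReal) * φ z := by
  have hset : ∀ z : Fin m → Fin n,
      {ω : Ω | (fun b => Z b ω) = z} = ⋂ b, Z b ⁻¹' {z b} := by
    intro z
    ext ω
    simp [funext_iff]
  have hms : ∀ z : Fin m → Fin n, MeasurableSet {ω : Ω | (fun b => Z b ω) = z} := by
    intro z
    rw [hset z]
    exact MeasurableSet.iInter fun b => hmeas b (measurableSet_singleton _)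
  have hpt : ∀ ω, φ (fun b => Z b ω) =
      ∑ z : Fin m → Fin n, Set.indicator {ω' : Ω | (fun b => Z b ω') = z} (fun _ => φ z) ω := by
    intro ω
    have : ∀ z : Fin m → Fin n,
        Set.indicator {ω' : Ω | (fun b => Z b ω') = z} (fun _ => φ z) ω
          = if (fun b => Z b ω) = z then φ z else 0 := by
      intro z
      simp [Set.indicator_apply, Set.mem_setOf_eq]
    rw [Finset.sum_congr rfl fun z _ => this z, Finset.sum_ite_eq]
    simp
  calc ∫ ω, φ (fun b => Z b ω) ∂μ
      = ∫ ω, ∑ z : Fin m → Fin n,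
          Set.indicator {ω' : Ω | (fun b => Z b ω') = z} (fun _ => φ z) ω ∂μ := by
        exact integral_congr_ae (Filter.Eventually.of_forall hpt)
    _ = ∑ z : Fin m → Fin n,
          ∫ ω, Set.indicator {ω' : Ω | (fun b => Z b ω') = z} (fun _ => φ z) ω ∂μ := by
        exact integral_finset_sum _ fun z _ => (integrable_const (φ z)).indicator (hms z)
    _ = ∑ z : Fin m → Fin n, (μ {ω' : Ω | (fun b => Z b ω') = z}).toReal * φ z := by
        refine Finset.sum_congr rfl fun z _ => ?_
        rw [integral_indicator_const (φ z) (hms z), smul_eq_mul]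
        rfl
    _ = ∑ z : Fin m → Fin n, (∏ b, (μ (Z b ⁻¹' {z b})).toReal) * φ z := by
        refine Finset.sum_congr rfl fun z _ => ?_
        congr 1
        rw [hset z, ← ENNReal.toReal_prod]
        congr 1
        have := hind.measure_inter_preimage_eq_mul (Finset.univ : Finset (Fin m))
          (sets := fun b => ({z b} : Set (Fin n)))
          (fun b _ => measurableSet_singleton _)
        simpa using this

/-- if `m` balls are thrown independently into `n` bins (not necessarily
uniformly, with possibly different distributions per ball), the bin counts `B i` are
negatively associated. -/
theorem balls_and_bins_NA
    {Ω : Type*} [MeasurableSpace Ω] (μ : Measure Ω) [IsProbabilityMeasure μ]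
    (m n : ℕ) (Z : Fin m → Ω → Fin n)
    (hmeas : ∀ b, Measurable (Z b))
    (hind : ProbabilityTheory.iIndepFun Z μ) :
    NegAssoc μ (fun (i : Fin n) (ω : Ω) =>
      ((Finset.univ.filter (fun b : Fin m => Z b ω = i)).card : ℝ)) := by
  intro S T hST f g hf hg hfS hgT
  have key : ∀ φ : (Fin n → ℝ) → ℝ,
      ∫ ω, φ (fun i => ((Finset.univ.filter (fun b : Fin m => Z b ω = i)).card : ℝ)) ∂μ
        = ∑ z : Fin m → Fin n, (∏ b, (μ (Z b ⁻¹' {z b})).toReal) * φ (ballCount z) := by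
    intro φ
    exact integral_eq_sum μ m n Z hmeas hind (fun z => φ (ballCount z))
  rw [key (fun x => f x * g x), key f, key g]
  refine core_NA n m (fun b i => (μ (Z b ⁻¹' {i})).toReal)
    (fun b i => ENNReal.toReal_nonneg) ?_ S T hST f g hf hg hfS hgT
  intro b
  have h1 : (∑ i : Fin n, μ (Z b ⁻¹' {i})) = 1 := by
    rw [sum_measure_preimage_singleton (Finset.univ : Finset (Fin n))
      (fun i _ => hmeas b (measurableSet_singleton i))]
    simp
  rw [← ENNReal.toReal_sum (fun i _ => measure_ne_top μ _), h1, ENNReal.toReal_one]
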